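/- arXiv:2204.10950 — 5 statements merged into one kernel-verified Lean document; each statement's English description precedes it below -/
import Mathlib

section
/- Let B be a sixth-power-free integer and P = (x,y) a non-torsion integral point on y² = x³ + B such that [2]P is integral. Then |y|³ divides 27·B², and consequently |x|³ < 10·|B|^{4/3}. -/
/-- The Mordell curve `y² = x³ + B` as a Weierstrass curve over `ℚ`. -/
def Mordell (B : ℚ) : WeierstrassCurve.Affine ℚ :=
  { a₁ := 0, a₂ := 0, a₃ := 0, a₄ := 0, a₆ := B }

/-- `B` is sixth-power-free: no sixth power of a prime divides it. -/
def SixthPowerFree (B : ℤ) : Prop := ∀ p : ℕ, p.Prime → ¬ ((p : ℤ) ^ 6 ∣ B)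

/-- A rational point on the Mordell curve is integral if it is affine with
integer coordinates. -/
def IsIntegralPoint {B : ℚ} (P : (Mordell B).Point) : Prop :=
  ∃ (x y : ℚ) (h : (Mordell B).Nonsingular x y),
    P = WeierstrassCurve.Affine.Point.some _ _ h ∧ x.den = 1 ∧ y.den = 1

lemma int_pow_dvd_iff {p : ℕ} (hp : p.Prime) {z : ℤ} (hz : z ≠ 0) (k : ℕ) :
    (p : ℤ) ^ k ∣ z ↔ k ≤ z.natAbs.factorization p := by
  rw [← Nat.Prime.pow_dvd_iff_le_factorization hp (Int.natAbs_ne_zero.mpr hz),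
    ← Int.natAbs_dvd_natAbs, Int.natAbs_pow, Int.natAbs_natCast]

lemma key_dvd (x y B : ℤ) (hy : y ≠ 0) (hB : B ≠ 0) (heq : y ^ 2 = x ^ 3 + B)
    (hdvd : y ^ 2 ∣ 9 * x * B) : y ^ 3 ∣ 27 * B ^ 2 := by
  rcases eq_or_ne x 0 with rfl | hx
  · have hBy : B = y ^ 2 := by linarith
    exact ⟨27 * y, by rw [hBy]; ring⟩
  -- prime-by-prime
  have hy3 : y ^ 3 ≠ 0 := pow_ne_zero _ hy
  rw [← Int.natAbs_dvd_natAbs]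
  have h27 : (27 * B ^ 2).natAbs = 27 * B.natAbs ^ 2 := by
    rw [Int.natAbs_mul, Int.natAbs_pow]; rfl
  rw [Int.natAbs_pow, h27]
  have hYn : y.natAbs ≠ 0 := Int.natAbs_ne_zero.mpr hy
  have hBn : B.natAbs ≠ 0 := Int.natAbs_ne_zero.mpr hB
  have hXn : x.natAbs ≠ 0 := Int.natAbs_ne_zero.mpr hx
  rw [← Nat.factorization_le_iff_dvd (pow_ne_zero _ hYn)
    (by positivity)]
  intro p
  by_cases hp : p.Prime
  · have h9 : ((9 : ℤ) * x * B).natAbs = 9 * x.natAbs * B.natAbs := by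
      rw [Int.natAbs_mul, Int.natAbs_mul]; rfl
    have hdvd' : y.natAbs ^ 2 ∣ 9 * x.natAbs * B.natAbs := by
      rw [← h9, ← Int.natAbs_pow]; exact Int.natAbs_dvd_natAbs.mpr hdvd
    set v := y.natAbs.factorization p with hv
    set a := x.natAbs.factorization p with ha
    set b := B.natAbs.factorization p with hb2
    set c := (3 : ℕ).factorization p with hc
    have hcle : c ≤ 1 := by
      rw [hc, Nat.Prime.factorization Nat.prime_three, Finsupp.single_apply]
      split <;> omega
    have hfacts9 : (9 * x.natAbs * B.natAbs).factorization p = 2 * c + a + b := by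
      have : (9 : ℕ) = 3 ^ 2 := rfl
      rw [Nat.factorization_mul (by positivity) hBn, Nat.factorization_mul (by norm_num) hXn,
        this, Nat.factorization_pow]
      simp only [Finsupp.coe_add, Pi.add_apply, Finsupp.smul_apply, smul_eq_mul]
      rfl
    have h2v : 2 * v ≤ 2 * c + a + b := by
      have := (Nat.factorization_le_iff_dvd (pow_ne_zero _ hYn)
        (by positivity)).mpr hdvd' p
      rwa [Nat.factorization_pow, Finsupp.smul_apply, smul_eq_mul, hfacts9] at this
    have hgoal27 : (27 * B.natAbs ^ 2).factorization p = 3 * c + 2 * b := by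
      have : (27 : ℕ) = 3 ^ 3 := rfl
      rw [Nat.factorization_mul (by norm_num) (pow_ne_zero _ hBn), this,
        Nat.factorization_pow, Nat.factorization_pow]
      simp only [Finsupp.coe_add, Pi.add_apply, Finsupp.smul_apply, smul_eq_mul]
      rfl
    rw [Nat.factorization_pow, Finsupp.smul_apply, smul_eq_mul, hgoal27]
    -- goal: 3 * v ≤ 3 * c + 2 * b
    rcases le_or_gt (2 * v) b with h1 | h1
    · omega
    · have h3ab : 3 * a ≤ b := by
        by_contra hcon
        push_neg at hcon
        have hdy : (p : ℤ) ^ (b + 1) ∣ y ^ 2 := by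
          rw [int_pow_dvd_iff hp (pow_ne_zero _ hy), Int.natAbs_pow, Nat.factorization_pow,
            Finsupp.smul_apply, smul_eq_mul]
          omega
        have hdx : (p : ℤ) ^ (b + 1) ∣ x ^ 3 := by
          rw [int_pow_dvd_iff hp (pow_ne_zero _ hx), Int.natAbs_pow, Nat.factorization_pow,
            Finsupp.smul_apply, smul_eq_mul]
          omega
        have hdB : (p : ℤ) ^ (b + 1) ∣ B := by
          have : B = y ^ 2 - x ^ 3 := by linarith
          rw [this]; exact dvd_sub hdy hdx
        rw [int_pow_dvd_iff hp hB] at hdB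
        omega
      omega
  · simp [Nat.factorization_eq_zero_of_not_prime _ hp]

lemma real_bound (x y B : ℤ) (hB : B ≠ 0) (heq : y ^ 2 = x ^ 3 + B)
    (hd : y ^ 3 ∣ 27 * B ^ 2) : |(x : ℝ)| ^ 3 < 10 * |(B : ℝ)| ^ ((4 : ℝ) / 3) := by
  have hyle : |y| ^ 3 ≤ 27 * B ^ 2 := by
    refine Int.le_of_dvd (by positivity) ?_
    rwa [← abs_pow, abs_dvd]
  have hx3 : x ^ 3 = y ^ 2 - B := by linarith
  rcases lt_or_ge |B| 2 with hB1 | hB2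
  · -- |B| = 1
    have hBa : |B| = 1 := by
      have h0 := abs_pos.mpr hB
      omega
    have hB1' : B ^ 2 = 1 := by rw [← sq_abs, hBa]; norm_num
    have h27 : |y| ^ 3 ≤ 3 ^ 3 := by rw [hB1'] at hyle; norm_num at hyle ⊢; exact hyle
    have hy3 : |y| ≤ 3 := le_of_pow_le_pow_left₀ (by norm_num) (by norm_num) h27
    have hxabs : |x| ^ 3 ≤ 10 := by
      have h1 : |x| ^ 3 = |x ^ 3| := pow_abs x 3
      have h2 : |x ^ 3| ≤ |y ^ 2| + |B| := by
        rw [hx3, sub_eq_add_neg]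
        exact (abs_add_le _ _).trans (by rw [abs_neg])
      have h3 : |y ^ 2| ≤ 9 := by
        rw [abs_pow]
        nlinarith [abs_nonneg y]
      omega
    have hx2 : |x| ≤ 2 := by
      have : |x| < 3 := by
        refine lt_of_pow_lt_pow_left₀ 3 (by norm_num) ?_
        calc |x| ^ 3 ≤ 10 := hxabs
          _ < 3 ^ 3 := by norm_num
      omega
    have hBr : |(B : ℝ)| = 1 := by rw [← Int.cast_abs, hBa]; norm_num
    rw [hBr, Real.one_rpow, mul_one]
    have hxr : |(x : ℝ)| ≤ 2 := by rw [← Int.cast_abs]; exact_mod_cast hx2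
    have h8 : |(x : ℝ)| ^ 3 ≤ 2 ^ 3 := pow_le_pow_left₀ (abs_nonneg _) hxr 3
    norm_num at h8
    linarith
  · -- |B| ≥ 2
    set b : ℝ := |(B : ℝ)| with hbdef
    have hb2 : (2 : ℝ) ≤ b := by
      rw [hbdef, ← Int.cast_abs]; exact_mod_cast hB2
    have hb0 : (0 : ℝ) ≤ b := by linarith
    have hyr : |(y : ℝ)| ^ 3 ≤ 27 * b ^ 2 := by
      have h : ((|y| ^ 3 : ℤ) : ℝ) ≤ ((27 * B ^ 2 : ℤ) : ℝ) := by exact_mod_cast hyle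
      rw [hbdef, ← Int.cast_abs]
      push_cast at h ⊢
      nlinarith [sq_abs ((B : ℝ) )]
    have hy2 : (y : ℝ) ^ 2 ≤ 9 * b ^ ((4 : ℝ) / 3) := by
      have e : (9 * b ^ ((4 : ℝ) / 3)) ^ 3 = 729 * b ^ (4 : ℕ) := by
        rw [mul_pow, ← Real.rpow_natCast (b ^ ((4 : ℝ) / 3)) 3, ← Real.rpow_mul hb0,
          show ((4:ℝ)/3) * ((3:ℕ):ℝ) = ((4:ℕ):ℝ) by norm_num, Real.rpow_natCast]
        norm_num
      have h1 : ((y : ℝ) ^ 2) ^ 3 ≤ (9 * b ^ ((4 : ℝ) / 3)) ^ 3 := by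
        rw [e]
        have h2 : (|(y : ℝ)| ^ 3) ^ 2 ≤ (27 * b ^ 2) ^ 2 := by
          nlinarith [pow_nonneg (abs_nonneg ((y : ℝ))) 3]
        calc ((y : ℝ) ^ 2) ^ 3 = (|(y : ℝ)| ^ 3) ^ 2 := by
              rw [← sq_abs (y : ℝ)]; ring
          _ ≤ (27 * b ^ 2) ^ 2 := h2
          _ = 729 * b ^ (4 : ℕ) := by ring
      exact le_of_pow_le_pow_left₀ (by norm_num) (by positivity) h1
    have hbb : b < b ^ ((4 : ℝ) / 3) := by
      nth_rewrite 1 [← Real.rpow_one b]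
      rw [Real.rpow_lt_rpow_left_iff (by linarith)]
      norm_num
    have hx3r : ((x : ℝ)) ^ 3 = (y : ℝ) ^ 2 - (B : ℝ) := by exact_mod_cast hx3
    have habs : |(x : ℝ)| ^ 3 ≤ (y : ℝ) ^ 2 + b := by
      rw [pow_abs, hx3r, sub_eq_add_neg]
      refine (abs_add_le _ _).trans ?_
      rw [abs_neg, abs_of_nonneg (sq_nonneg _)]
    linarith

theorem stmt_2 (B x y : ℤ) (hB : B ≠ 0) (hB6 : SixthPowerFree B)
    (h : (Mordell B).Nonsingular (x : ℚ) (y : ℚ))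
    (htor : ∀ n : ℤ, n ≠ 0 → n • WeierstrassCurve.Affine.Point.some _ _ h ≠ 0)
    (h2 : IsIntegralPoint ((2 : ℤ) • WeierstrassCurve.Affine.Point.some _ _ h)) :
    |y| ^ 3 ∣ 27 * B ^ 2 ∧
      |(x : ℝ)| ^ 3 < 10 * |(B : ℝ)| ^ ((4 : ℝ) / 3) := by
  have heqQ : (y : ℚ) ^ 2 = (x : ℚ) ^ 3 + (B : ℚ) := by
    have := ((Mordell B).equation_iff (x : ℚ) (y : ℚ)).mp h.1
    simpa [Mordell] using this
  have heqZ : y ^ 2 = x ^ 3 + B := by exact_mod_cast heqQ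
  have hy0 : y ≠ 0 := by
    intro hy
    apply htor 2 (by norm_num)
    have hyQ : (y : ℚ) = (Mordell B).negY x y := by
      simp [Mordell, WeierstrassCurve.Affine.negY, hy]
    rw [show ((2 : ℤ) • WeierstrassCurve.Affine.Point.some _ _ h) =
      WeierstrassCurve.Affine.Point.some _ _ h + WeierstrassCurve.Affine.Point.some _ _ h from
      two_zsmul _]
    exact WeierstrassCurve.Affine.Point.add_self_of_Y_eq hyQ
  have hne : (y : ℚ) ≠ (Mordell B).negY x y := by
    simp only [Mordell, WeierstrassCurve.Affine.negY]
    intro hcon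
    apply hy0
    have : (y : ℚ) = 0 := by linarith [hcon]
    exact_mod_cast this
  have hadd : (2 : ℤ) • WeierstrassCurve.Affine.Point.some _ _ h =
      WeierstrassCurve.Affine.Point.some _ _
        (WeierstrassCurve.Affine.nonsingular_add h h fun hxy => hne hxy.2) := by
    rw [two_zsmul]
    exact WeierstrassCurve.Affine.Point.add_self_of_Y_ne hne
  obtain ⟨x', y', h', hP, hxden, -⟩ := h2
  rw [hadd] at hP
  have hxx : (Mordell B).addX x x ((Mordell B).slope x x y y) = x' :=
    (WeierstrassCurve.Affine.Point.some.inj hP).1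
  have hslope : (Mordell B).slope x x y y = 3 * (x:ℚ) ^ 2 / (2 * y) := by
    rw [WeierstrassCurve.Affine.slope_of_Y_ne rfl hne]
    simp [Mordell, WeierstrassCurve.Affine.negY]
    ring
  have hyQ0 : (y : ℚ) ≠ 0 := Int.cast_ne_zero.mpr hy0
  have hxval : (x' : ℚ) = 9 * (x:ℚ) ^ 4 / (4 * (y:ℚ) ^ 2) - 2 * x := by
    rw [← hxx, hslope]
    simp [Mordell, WeierstrassCurve.Affine.addX]
    field_simp
    ring
  -- x' is an integer
  have hint : (x'.num : ℚ) = x' := by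
    rw [← Rat.num_div_den x', hxden]; norm_num
  have hZeq : x'.num * (4 * y ^ 2) = 9 * x ^ 4 - 2 * x * (4 * y ^ 2) := by
    have : (x'.num : ℚ) * (4 * (y:ℚ) ^ 2) = 9 * (x:ℚ) ^ 4 - 2 * x * (4 * (y:ℚ) ^ 2) := by
      rw [hint, hxval]
      field_simp
    exact_mod_cast this
  have hdvd4 : y ^ 2 ∣ 9 * x ^ 4 := by
    refine ⟨4 * (x'.num + 2 * x), ?_⟩
    linear_combination -hZeq
  have hdvd : y ^ 2 ∣ 9 * x * B := by
    have h1 : 9 * x * B = 9 * x * y ^ 2 - 9 * x ^ 4 := by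
      linear_combination (-9 * x) * heqZ
    rw [h1]
    exact dvd_sub (dvd_mul_left (y ^ 2) (9 * x)) hdvd4
  have hkey : y ^ 3 ∣ 27 * B ^ 2 := key_dvd x y B hy0 hB heqZ hdvd
  constructor
  · rwa [← abs_pow, abs_dvd]
  · exact real_bound x y B hB heqZ hkey
end

section
/- Let B be a sixth-power-free integer and P = (a,b) a non-torsion integral point on y² = x³ + B with ord_2(a) = 1 and ord_2(b) = 1. Then [4]P is not an integral point. -/
lemma parity_aux (B : ℤ) (u v x4 : ℚ) (U V : ℤ) (hOddU : Odd U) (hOddV : Odd V)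
    (hu : u = (U : ℚ) / (V : ℚ)) (hv2 : v ^ 2 = u ^ 3 + (B : ℚ)) (hv0 : v ≠ 0)
    (hx4 : x4 = (3 * u ^ 2 / (2 * v)) ^ 2 - u - u) (hden : x4.den = 1) : False := by
  have hV0 : V ≠ 0 := by
    rintro rfl
    exact (Int.not_odd_iff_even.mpr Even.zero) hOddV
  have hVq : (V : ℚ) ≠ 0 := Int.cast_ne_zero.mpr hV0
  have hrel : v ^ 2 * (V : ℚ) ^ 3 = (U : ℚ) ^ 3 + (B : ℚ) * (V : ℚ) ^ 3 := by
    rw [hv2, hu]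
    field_simp
  have A : x4 * (4 * v ^ 2) * (V : ℚ) ^ 4
      = 9 * (U : ℚ) ^ 4 - 8 * (U : ℚ) * (V : ℚ) ^ 3 * v ^ 2 := by
    rw [hx4, hu]
    field_simp
    ring
  have key : x4 * (4 * ((U : ℚ) ^ 3 + (B : ℚ) * (V : ℚ) ^ 3) * (V : ℚ))
      = (U : ℚ) * ((U : ℚ) ^ 3 - 8 * (B : ℚ) * (V : ℚ) ^ 3) := by
    linear_combination A - (4 * x4 * (V : ℚ) + 8 * (U : ℚ)) * hrel
  have hx4int : ((x4.num : ℤ) : ℚ) = x4 := by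
    have := Rat.num_div_den x4
    rw [hden] at this
    simpa using this
  rw [← hx4int] at key
  have keyZ : x4.num * (4 * (U ^ 3 + B * V ^ 3) * V) = U * (U ^ 3 - 8 * B * V ^ 3) := by
    exact_mod_cast key
  have hev : Even (x4.num * (4 * (U ^ 3 + B * V ^ 3) * V)) :=
    ⟨x4.num * ((U ^ 3 + B * V ^ 3) * V) * 2, by ring⟩
  have hod : Odd (U * (U ^ 3 - 8 * B * V ^ 3)) :=
    hOddU.mul ((hOddU.pow).sub_even ⟨4 * B * V ^ 3, by ring⟩)
  rw [keyZ] at hev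
  exact (Int.not_odd_iff_even.mpr hev) hod

open WeierstrassCurve.Affine WeierstrassCurve.Affine.Point

theorem stmt_3 (B a b : ℤ) (hB : B ≠ 0) (hB6 : SixthPowerFree B)
    (h : (Mordell B).Nonsingular (a : ℚ) (b : ℚ))
    (htor : ∀ n : ℤ, n ≠ 0 → n • WeierstrassCurve.Affine.Point.some _ _ h ≠ 0)
    (ha2 : padicValInt 2 a = 1) (hb2 : padicValInt 2 b = 1) :
    ¬ IsIntegralPoint ((4 : ℤ) • WeierstrassCurve.Affine.Point.some _ _ h) := by
  have ha0 : a ≠ 0 := by rintro rfl; simp [padicValInt] at ha2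
  have hb0 : b ≠ 0 := by rintro rfl; simp [padicValInt] at hb2
  have h2a : (2:ℤ) ∣ a := by
    have := (padicValInt_dvd_iff (p := 2) 1 a).mpr (Or.inr (by omega))
    simpa using this
  have h4a : ¬ ((2:ℤ)^2 ∣ a) := by
    intro hd
    rcases (padicValInt_dvd_iff (p := 2) 2 a).mp hd with h' | h' <;> omega
  have h2b : (2:ℤ) ∣ b := by
    have := (padicValInt_dvd_iff (p := 2) 1 b).mpr (Or.inr (by omega))
    simpa using this
  have h4b : ¬ ((2:ℤ)^2 ∣ b) := by
    intro hd
    rcases (padicValInt_dvd_iff (p := 2) 2 b).mp hd with h' | h' <;> omega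
  obtain ⟨a', rfl⟩ := h2a
  obtain ⟨b', rfl⟩ := h2b
  have hoa : Odd a' := by
    rcases Int.even_or_odd a' with ⟨c, hc⟩ | ho
    · exact absurd ⟨c, by rw [hc]; ring⟩ h4a
    · exact ho
  have hob : Odd b' := by
    rcases Int.even_or_odd b' with ⟨c, hc⟩ | ho
    · exact absurd ⟨c, by rw [hc]; ring⟩ h4b
    · exact ho
  have hb'0 : b' ≠ 0 := by rintro rfl; simp at hb0
  have hbq0 : ((2 * b' : ℤ) : ℚ) ≠ 0 := Int.cast_ne_zero.mpr hb0
  have hOddU : Odd (a' * (9 * a' ^ 3 - 4 * b' ^ 2)) :=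
    hoa.mul ((Odd.mul (by decide) (hoa.pow)).sub_even ⟨2 * b' ^ 2, by ring⟩)
  have hOddV : Odd (b' ^ 2) := hob.pow
  -- doubling
  have hyne : ((2 * b' : ℤ) : ℚ) ≠ (Mordell B).negY ((2 * a' : ℤ) : ℚ) ((2 * b' : ℤ) : ℚ) := by
    simp only [Mordell, WeierstrassCurve.Affine.negY, zero_mul, sub_zero]
    intro hc
    apply hbq0
    linarith [hc]
  set L : ℚ := (Mordell B).slope ((2 * a' : ℤ) : ℚ) ((2 * a' : ℤ) : ℚ)
      ((2 * b' : ℤ) : ℚ) ((2 * b' : ℤ) : ℚ) with hL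
  set u : ℚ := (Mordell B).addX ((2 * a' : ℤ) : ℚ) ((2 * a' : ℤ) : ℚ) L with hu'
  set v : ℚ := (Mordell B).addY ((2 * a' : ℤ) : ℚ) ((2 * a' : ℤ) : ℚ) ((2 * b' : ℤ) : ℚ) L
    with hv'
  have h2P : (Mordell B).Nonsingular u v := nonsingular_add h h fun hxy => hyne hxy.right
  have hLval : L = 3 * ((2 * a' : ℤ) : ℚ) ^ 2 / (2 * ((2 * b' : ℤ) : ℚ)) := by
    rw [hL, slope_of_Y_ne rfl hyne]
    simp [Mordell]
    ring
  have huval : u = ((a' * (9 * a' ^ 3 - 4 * b' ^ 2) : ℤ) : ℚ) / ((b' ^ 2 : ℤ) : ℚ) := by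
    rw [hu', hLval]
    simp only [Mordell, WeierstrassCurve.Affine.addX, zero_mul, add_zero, sub_zero]
    push_cast
    field_simp
    ring
  have hv2 : v ^ 2 = u ^ 3 + (B : ℚ) := by
    have he2 := ((Mordell B).equation_iff u v).mp h2P.left
    simp only [Mordell] at he2
    linarith [he2]
  have h4P : ((4 : ℤ) • WeierstrassCurve.Affine.Point.some _ _ h)
      = WeierstrassCurve.Affine.Point.some _ _ h2P + WeierstrassCurve.Affine.Point.some _ _ h2P := by
    rw [show (4:ℤ) = 2 + 2 by norm_num, add_zsmul, two_zsmul, add_self_of_Y_ne hyne]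
  by_cases hv0 : v = 0
  · have hz : ((4 : ℤ) • WeierstrassCurve.Affine.Point.some _ _ h) = 0 := by
      rw [h4P, add_self_of_Y_eq]
      simp [Mordell, WeierstrassCurve.Affine.negY, hv0]
    exact fun _ => htor 4 (by norm_num) hz
  · have hvne : v ≠ (Mordell B).negY u v := by
      simp only [Mordell, WeierstrassCurve.Affine.negY, zero_mul, sub_zero]
      intro hc
      apply hv0
      linarith [hc]
    rintro ⟨x4, y4, h4, heq, hxden, -⟩
    rw [h4P, add_self_of_Y_ne hvne] at heq
    injection heq with hx4 hrest
    have hslope2 : (Mordell B).slope u u v v = 3 * u ^ 2 / (2 * v) := by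
      rw [slope_of_Y_ne rfl hvne]
      simp [Mordell]
      ring
    have hx4eq : x4 = (3 * u ^ 2 / (2 * v)) ^ 2 - u - u := by
      rw [← hx4, hslope2]
      simp [Mordell, WeierstrassCurve.Affine.addX]
    exact parity_aux B u v x4 (a' * (9 * a' ^ 3 - 4 * b' ^ 2)) (b' ^ 2)
      hOddU hOddV huval hv2 hv0 hx4eq hxden
end

section
/- Let X and B be coprime integers with X ≡ −B (mod 3) and 3 ∤ X. Then ord_3(7X² − XB + B²) ∈ {2, 3}. -/
theorem stmt_10 (X B : ℤ) (hco : IsCoprime X B) (hmod : X ≡ -B [ZMOD 3])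
    (h3 : ¬ (3 : ℤ) ∣ X) :
    padicValInt 3 (7 * X ^ 2 - X * B + B ^ 2) = 2 ∨
      padicValInt 3 (7 * X ^ 2 - X * B + B ^ 2) = 3 := by
  have hdvd : (3 : ℤ) ∣ X + B := by
    have := hmod.dvd
    omega
  obtain ⟨a, ha⟩ := hdvd
  have hB : B = 3 * a - X := by omega
  set N : ℤ := a ^ 2 - a * X + X ^ 2 with hN
  have hM : 7 * X ^ 2 - X * B + B ^ 2 = 9 * N := by
    rw [hB, hN]; ring
  have h9N : ¬ (9 : ℤ) ∣ N := by
    intro ⟨k, hk⟩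
    have key : ∀ u x : ZMod 9, u ^ 2 - u * x + x ^ 2 = 0 →
        ZMod.castHom (show (3:ℕ) ∣ 9 by norm_num) (ZMod 3) x = 0 := by decide
    have hcast : ((N : ℤ) : ZMod 9) = 0 := by
      rw [hk, show ((9 * k : ℤ) : ZMod 9) = 9 * (k : ZMod 9) by push_cast; ring,
        show (9 : ZMod 9) = 0 by decide, zero_mul]
    have : (a : ZMod 9) ^ 2 - (a : ZMod 9) * (X : ZMod 9) + (X : ZMod 9) ^ 2 = 0 := by
      rw [hN] at hcast; push_cast at hcast; linear_combination hcast
    have hx3 := key _ _ this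
    rw [show (ZMod.castHom (by norm_num : (3:ℕ) ∣ 9) (ZMod 3)) ((X : ℤ) : ZMod 9)
        = ((X : ℤ) : ZMod 3) from by simp] at hx3
    exact h3 ((ZMod.intCast_zmod_eq_zero_iff_dvd X 3).mp hx3)
  have hNne : N ≠ 0 := fun h => h9N (h ▸ dvd_zero 9)
  have hMne : 7 * X ^ 2 - X * B + B ^ 2 ≠ 0 := by
    rw [hM]; exact mul_ne_zero (by norm_num) hNne
  haveI : Fact (Nat.Prime 3) := ⟨by norm_num⟩
  have h2le : 2 ≤ padicValInt 3 (7 * X ^ 2 - X * B + B ^ 2) := by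
    have : ((3 : ℤ)) ^ 2 ∣ 7 * X ^ 2 - X * B + B ^ 2 := by
      rw [hM]; exact ⟨N, by ring⟩
    rcases (padicValInt_dvd_iff 2 _).mp this with h | h
    · exact absurd h hMne
    · exact h
  have h4gt : ¬ 4 ≤ padicValInt 3 (7 * X ^ 2 - X * B + B ^ 2) := by
    intro h
    have : ((3 : ℤ)) ^ 4 ∣ 7 * X ^ 2 - X * B + B ^ 2 :=
      (padicValInt_dvd_iff 4 _).mpr (Or.inr h)
    rw [hM] at this
    obtain ⟨k, hk⟩ := this
    exact h9N ⟨k, by linarith⟩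
  omega
end

section
/- Let B be a sixth-power-free integer and P = (a,b) a non-torsion integral point on y² = x³ + B such that [3]P is integral. If p > 3 is a prime dividing both B and a, then ord_p(a) < ord_p(B). -/
open WeierstrassCurve.Affine WeierstrassCurve.Affine.Point in
theorem aux_key_dvd (B a b : ℤ) (hB : B ≠ 0) (ha0 : a ≠ 0)
    (h : (Mordell B).Nonsingular (a : ℚ) (b : ℚ))
    (htor : ∀ n : ℤ, n ≠ 0 → n • WeierstrassCurve.Affine.Point.some _ _ h ≠ 0)
    (h3 : IsIntegralPoint ((3 : ℤ) • WeierstrassCurve.Affine.Point.some _ _ h)) :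
    (3*a*(a^3+4*B))^2 ∣ (a^9 - 96*B*a^6 + 48*B^2*a^3 + 64*B^3) := by
  have hE : (b:ℚ)^2 = (a:ℚ)^3 + (B:ℚ) := by
    have := (equation_iff ..).mp h.1
    simpa [Mordell] using this
  have hb0 : (b:ℚ) ≠ 0 := by
    intro hb
    apply htor 2 two_ne_zero
    rw [two_zsmul]
    exact add_self_of_Y_eq (by simp [Mordell, negY, hb])
  have hb2 : (b:ℚ) ≠ (Mordell B).negY a b := by
    simp only [Mordell, negY]
    intro hc
    exact hb0 (by push_cast at hc ⊢; linarith)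
  have hL : (Mordell B).slope a a b b = 3*(a:ℚ)^2/(2*b) := by
    rw [slope_of_Y_ne rfl hb2]
    simp only [Mordell, negY]
    ring
  have hX2 : (Mordell B).addX a a ((Mordell B).slope a a b b)
      = ((a:ℚ)^4 - 8*a*B)/(4*(b:ℚ)^2) := by
    rw [hL]
    simp only [Mordell, addX]
    field_simp
    linear_combination (-32*(a:ℚ)) * hE
  have hY2 : (Mordell B).addY a a b ((Mordell B).slope a a b b)
      = ((a:ℚ)^6+20*(a:ℚ)^3*B-8*(B:ℚ)^2)/(8*(b:ℚ)^3) := by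
    rw [addY, negAddY, hX2, hL]
    simp only [Mordell, negY]
    field_simp
    linear_combination (8*(4*(a:ℚ)^3 - 8*B - 8*(b:ℚ)^2)) * hE
  have h3eq : (3:ℤ) • Point.some _ _ h = (Point.some _ _ h + Point.some _ _ h) + Point.some _ _ h := by
    rw [show (3:ℤ) = 2+1 by norm_num, add_zsmul, two_zsmul, one_zsmul]
  have hadd2 := add_self_of_Y_ne (h₁ := h) hb2
  -- case split on a^3 + 4B = 0
  by_cases hc : (a:ℚ)^3 + 4*B = 0
  · exfalso
    apply htor 3 (by norm_num)
    rw [h3eq, hadd2]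
    refine add_of_Y_eq ?_ ?_
    · rw [hX2]
      field_simp
      linear_combination (-4:ℚ)*hE + (-3:ℚ)*hc
    · rw [hY2]
      show _ = (Mordell B).negY _ _
      simp only [Mordell, negY]
      field_simp
      linear_combination (8*((b:ℚ)^2+(a:ℚ)^3+B))*hE + (9*(a:ℚ)^3)*hc
  · have hc' : (a:ℚ) * ((a:ℚ)^3 + 4*B) ≠ 0 :=
      mul_ne_zero (Int.cast_ne_zero.mpr ha0) hc
    have hne : (Mordell B).addX a a ((Mordell B).slope a a b b) ≠ (a:ℚ) := by
      rw [hX2]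
      intro heq
      apply hc'
      field_simp at heq
      linear_combination (-1/3*(a:ℚ)) * heq + (-4/3*(a:ℚ))*hE
    obtain ⟨x, y, hxy, hPeq, hxden, hyden⟩ := h3
    rw [h3eq, hadd2, add_of_X_ne hne] at hPeq
    have hx := (Point.some.inj hPeq).1
    rw [slope_of_X_ne hne, hX2, hY2] at hx
    -- x = φ/ψ²
    have hψ : (3*(a:ℚ)*((a:ℚ)^3+4*B)) ≠ 0 := by
      intro hz
      apply hc'
      linarith [hz]
    have hxval : x * (3*(a:ℚ)*((a:ℚ)^3+4*B))^2
        = (a:ℚ)^9 - 96*B*(a:ℚ)^6 + 48*(B:ℚ)^2*(a:ℚ)^3 + 64*(B:ℚ)^3 := by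
      rw [← hx]
      simp only [Mordell, addX]
      have hsub : ((a:ℚ)^4 - 8*a*B)/(4*(b:ℚ)^2) - a = (-3*(a:ℚ)*((a:ℚ)^3+4*B))/(4*(b:ℚ)^2) := by
        field_simp
        linear_combination (-4:ℚ)*hE
      rw [hsub]
      have hs : (a:ℚ)^3 + (B:ℚ)*4 ≠ 0 := by
        intro h0
        exact hc (by linarith)
      field_simp
      linear_combination (4096*(b:ℚ)^6 + 4096*(B:ℚ)*(b:ℚ)^4 + 12288*(B:ℚ)^2*(b:ℚ)^2 - 4096*(B:ℚ)^3 + 4096*(a:ℚ)^3*(b:ℚ)^4 - 12288*(a:ℚ)^3*(B:ℚ)*(b:ℚ)^2 - 49152*(a:ℚ)^3*(B:ℚ)^2 + 3072*(a:ℚ)^6*(b:ℚ)^2 - 3072*(a:ℚ)^6*(B:ℚ) + 512*(a:ℚ)^9)*hE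
    -- convert to integers
    have hxint : x = (x.num : ℚ) := (Rat.den_eq_one_iff x).mp hxden |>.symm
    rw [hxint] at hxval
    refine ⟨x.num, ?_⟩
    have : ((a^9 - 96*B*a^6 + 48*B^2*a^3 + 64*B^3 : ℤ) : ℚ)
        = (((3*a*(a^3+4*B))^2 * x.num : ℤ) : ℚ) := by
      push_cast
      linear_combination -hxval
    exact_mod_cast this

theorem aux_val (B a : ℤ) (hB : B ≠ 0) (ha0 : a ≠ 0)
    (hdvd : (3*a*(a^3+4*B))^2 ∣ (a^9 - 96*B*a^6 + 48*B^2*a^3 + 64*B^3))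
    (p : ℕ) (hp : p.Prime) (hp3 : 3 < p) (hpB : (p : ℤ) ∣ B) (hpa : (p : ℤ) ∣ a) :
    padicValInt p a < padicValInt p B := by
  haveI : Fact p.Prime := ⟨hp⟩
  by_contra hcon
  push_neg at hcon
  set α := padicValInt p a with hα
  set β := padicValInt p B with hβ
  have hβ1 : 1 ≤ β := by
    rcases (padicValInt_dvd_iff 1 B).mp (by simpa using hpB) with h0 | h1
    · exact absurd h0 hB
    · exact h1
  have hpa' : (p:ℤ)^α ∣ a := padicValInt_dvd a
  have hpB' : (p:ℤ)^β ∣ B := padicValInt_dvd B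
  have hpaβ : (p:ℤ)^β ∣ a := (pow_dvd_pow _ hcon).trans hpa'
  have hψ : (p:ℤ)^(α+β) ∣ 3*a*(a^3+4*B) := by
    have h1 : (p:ℤ)^α * (p:ℤ)^β ∣ a * (a^3+4*B) :=
      mul_dvd_mul hpa'
        (dvd_add (hpaβ.trans (dvd_pow_self a three_ne_zero)) (hpB'.mul_left 4))
    rw [← pow_add] at h1
    exact h1.trans ⟨3, by ring⟩
  have hφ : (p:ℤ)^(3*β+1) ∣ (a^9 - 96*B*a^6 + 48*B^2*a^3 + 64*B^3) := by
    refine (pow_dvd_pow (p:ℤ) (show 3*β+1 ≤ (α+β)*2 by omega)).trans ?_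
    rw [pow_mul]
    exact (pow_dvd_pow_of_dvd hψ 2).trans hdvd
  have h9 : (p:ℤ)^(3*β+1) ∣ a^9 := by
    refine (pow_dvd_pow (p:ℤ) (show 3*β+1 ≤ α*9 by omega)).trans ?_
    rw [pow_mul]
    exact pow_dvd_pow_of_dvd hpa' 9
  have h6 : (p:ℤ)^(3*β+1) ∣ 96*B*a^6 := by
    refine (pow_dvd_pow (p:ℤ) (show 3*β+1 ≤ β+α*6 by omega)).trans ?_
    rw [pow_add, pow_mul, show (96:ℤ)*B*a^6 = 96*(B*a^6) by ring]
    exact (mul_dvd_mul hpB' (pow_dvd_pow_of_dvd hpa' 6)).mul_left 96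
  have h3 : (p:ℤ)^(3*β+1) ∣ 48*B^2*a^3 := by
    refine (pow_dvd_pow (p:ℤ) (show 3*β+1 ≤ β*2+α*3 by omega)).trans ?_
    rw [pow_add, pow_mul, pow_mul, show (48:ℤ)*B^2*a^3 = 48*(B^2*a^3) by ring]
    exact (mul_dvd_mul (pow_dvd_pow_of_dvd hpB' 2) (pow_dvd_pow_of_dvd hpa' 3)).mul_left 48
  have h64 : (p:ℤ)^(3*β+1) ∣ 64*B^3 := by
    have : (64:ℤ)*B^3 = (a^9 - 96*B*a^6 + 48*B^2*a^3 + 64*B^3) - a^9 + 96*B*a^6 - 48*B^2*a^3 := by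
      ring
    rw [this]
    exact dvd_sub (dvd_add (dvd_sub hφ h9) h6) h3
  have hp' : Prime (p:ℤ) := Nat.prime_iff_prime_int.mp hp
  have hnd : ¬ (p:ℤ) ∣ 64 := by
    intro hd
    rw [show (64:ℤ) = 2^6 by norm_num] at hd
    have := hp'.dvd_of_dvd_pow hd
    have h2 : (p:ℤ) ≤ 2 := Int.le_of_dvd (by norm_num) this
    omega
  have hB3 : (p:ℤ)^(3*β+1) ∣ B^3 := by
    have hcop : IsCoprime ((p:ℤ)^(3*β+1)) 64 :=
      (hp'.coprime_iff_not_dvd.mpr hnd).pow_left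
    exact hcop.dvd_of_dvd_mul_left h64
  have hval : 3*β+1 ≤ padicValInt p (B^3) := by
    rcases (padicValInt_dvd_iff (3*β+1) (B^3)).mp hB3 with h0 | h1
    · exact absurd h0 (pow_ne_zero 3 hB)
    · exact h1
  have hval3 : padicValInt p (B^3) = 3*β := by
    rw [show B^3 = B*B*B by ring, padicValInt.mul (mul_ne_zero hB hB) hB,
      padicValInt.mul hB hB]
    omega
  omega

theorem stmt_13 (B a b : ℤ) (hB : B ≠ 0) (hB6 : SixthPowerFree B)
    (h : (Mordell B).Nonsingular (a : ℚ) (b : ℚ))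
    (htor : ∀ n : ℤ, n ≠ 0 → n • WeierstrassCurve.Affine.Point.some _ _ h ≠ 0)
    (h3 : IsIntegralPoint ((3 : ℤ) • WeierstrassCurve.Affine.Point.some _ _ h))
    (p : ℕ) (hp : p.Prime) (hp3 : 3 < p) (hpB : (p : ℤ) ∣ B) (hpa : (p : ℤ) ∣ a) :
    padicValInt p a < padicValInt p B := by
  haveI : Fact p.Prime := ⟨hp⟩
  rcases eq_or_ne a 0 with rfl | ha0
  · rw [padicValInt.zero]
    rcases (padicValInt_dvd_iff 1 B).mp (by simpa using hpB) with h0 | h1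
    · exact absurd h0 hB
    · omega
  · exact aux_val B a hB ha0 (aux_key_dvd B a b hB ha0 h htor h3) p hp hp3 hpB hpa
end

section
/- The point P = (60, 450) on the curve y² = x³ − 13500 has integral multiples [2]P, [3]P, and [4]P; that is, [2]P, [3]P, [4]P all have integer coordinates. -/
open WeierstrassCurve.Affine

lemma some_eq_some {F : Type*} [Field F] {W : WeierstrassCurve.Affine F} {x₁ y₁ x₂ y₂ : F}
    (hx : x₁ = x₂) (hy : y₁ = y₂) {h₁ : W.Nonsingular x₁ y₁} {h₂ : W.Nonsingular x₂ y₂} :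
    Point.some _ _ h₁ = Point.some _ _ h₂ := by subst hx; subst hy; rfl

lemma nonsing (x y : ℚ) (hy : y ≠ 0) (he : y ^ 2 = x ^ 3 - 13500) :
    (Mordell (-13500)).Nonsingular x y := by
  rw [nonsingular_iff, equation_iff]
  constructor
  · simp only [Mordell]; ring_nf; linarith [he]
  · right; simp only [Mordell]; intro hc; apply hy; linarith [hc]

theorem stmt_16 (h : (Mordell (-13500)).Nonsingular 60 450) :
    IsIntegralPoint ((2 : ℤ) • WeierstrassCurve.Affine.Point.some _ _ h) ∧
    IsIntegralPoint ((3 : ℤ) • WeierstrassCurve.Affine.Point.some _ _ h) ∧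
    IsIntegralPoint ((4 : ℤ) • WeierstrassCurve.Affine.Point.some _ _ h) := by
  have h24 : (Mordell (-13500)).Nonsingular 24 (-18) := by
    apply nonsing <;> norm_num
  have h85 : (Mordell (-13500)).Nonsingular 85 (-775) := by
    apply nonsing <;> norm_num
  have h4 : (Mordell (-13500)).Nonsingular 2256 107154 := by
    apply nonsing <;> norm_num
  have hne : (450 : ℚ) ≠ (Mordell (-13500)).negY 60 450 := by
    simp [Mordell, negY]; norm_num
  have hs1 : (Mordell (-13500)).slope 60 60 450 450 = 12 := by
    rw [slope_of_Y_ne rfl hne]; simp [Mordell, negY]; norm_num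
  have e2 : Point.some _ _ h + Point.some _ _ h = Point.some _ _ h24 := by
    rw [Point.add_self_of_Y_ne hne]
    exact some_eq_some (by rw [hs1]; simp [Mordell]; norm_num)
      (by rw [hs1]; simp [Mordell, negY, addY, negAddY, addX]; norm_num)
  have t2 : (2 : ℤ) • Point.some _ _ h = Point.some _ _ h24 := by
    rw [two_zsmul, e2]
  have hx24 : (24 : ℚ) ≠ 60 := by norm_num
  have hs2 : (Mordell (-13500)).slope 24 60 (-18) 450 = 13 := by
    rw [slope_of_X_ne hx24]; norm_num
  have e3 : Point.some _ _ h24 + Point.some _ _ h = Point.some _ _ h85 := by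
    rw [Point.add_of_X_ne hx24]
    exact some_eq_some (by rw [hs2]; simp [Mordell]; norm_num)
      (by rw [hs2]; simp [Mordell, negY, addY, negAddY, addX]; norm_num)
  have t3 : (3 : ℤ) • Point.some _ _ h = Point.some _ _ h85 := by
    rw [show (3:ℤ) = 2 + 1 by norm_num, add_zsmul, one_zsmul, t2, e3]
  have hne2 : (-18 : ℚ) ≠ (Mordell (-13500)).negY 24 (-18) := by
    simp [Mordell, negY]; norm_num
  have hs3 : (Mordell (-13500)).slope 24 24 (-18) (-18) = -48 := by
    rw [slope_of_Y_ne rfl hne2]; simp [Mordell, negY]; norm_num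
  have e4 : Point.some _ _ h24 + Point.some _ _ h24 = Point.some _ _ h4 := by
    rw [Point.add_self_of_Y_ne hne2]
    exact some_eq_some (by rw [hs3]; simp [Mordell]; norm_num)
      (by rw [hs3]; simp [Mordell, negY, addY, negAddY, addX]; norm_num)
  have t4 : (4 : ℤ) • Point.some _ _ h = Point.some _ _ h4 := by
    rw [show (4:ℤ) = 2 + 2 by norm_num, add_zsmul, t2, e4]
  refine ⟨⟨24, -18, h24, t2, rfl, rfl⟩, ⟨85, -775, h85, t3, rfl, rfl⟩,
    ⟨2256, 107154, h4, t4, rfl, rfl⟩⟩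
end
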